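/- arXiv:1501.02082 — 2 statements merged into one kernel-verified Lean document; each statement's English description precedes it below -/
import Mathlib

section
/- Let L : [a,b] × ℝ × ℝ → ℝ and φ : [a,b] × ℝ → ℝ be C¹, and suppose x, h : [a,b] → ℝ are C¹ with associated continuous 'derivative' functions D x, D h (representing the combined Caputo derivatives), such that (ε, t) ↦ L(t, x(t)+ε h(t), Dx(t)+ε Dh(t)) is C¹. Define j(ε) = ∫_a^{T+ε ΔT} L(t, x(t)+ε h(t), Dx(t)+ε Dh(t)) dt + φ(T+ε ΔT, (x+ε h)(T+ε ΔT)). Then j is differentiable at 0 with j'(0) = ∫_a^T [∂₂L(t,x(t),Dx(t))·h(t) + ∂₃L(t,x(t),Dx(t))·Dh(t)] dt + L(T,x(T),Dx(T))·ΔT + ∂₁φ(T,x(T))·ΔT + ∂₂φ(T,x(T))·[h(T) + x'(T)·ΔT]. -/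
open Real Set intervalIntegral

/-- the first variation j'(0) for the free-time functional. -/
theorem first_variation (a b T ΔT : ℝ) (haT : a < T) (hTb : T < b)
    (L : ℝ → ℝ → ℝ → ℝ) (φ : ℝ → ℝ → ℝ)
    (hL : ContDiff ℝ 1 (fun p : ℝ × ℝ × ℝ => L p.1 p.2.1 p.2.2))
    (hφ : ContDiff ℝ 1 (fun p : ℝ × ℝ => φ p.1 p.2))
    (x h : ℝ → ℝ) (hx : ContDiff ℝ 1 x) (hh : ContDiff ℝ 1 h)
    (Dx Dh : ℝ → ℝ) (hDx : Continuous Dx) (hDh : Continuous Dh)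
    (hmix : ContDiff ℝ 1 (fun p : ℝ × ℝ =>
      L p.2 (x p.2 + p.1 * h p.2) (Dx p.2 + p.1 * Dh p.2))) :
    HasDerivAt
      (fun ε : ℝ =>
        (∫ t in a..(T + ε * ΔT), L t (x t + ε * h t) (Dx t + ε * Dh t))
          + φ (T + ε * ΔT) (x (T + ε * ΔT) + ε * h (T + ε * ΔT)))
      ((∫ t in a..T,
          deriv (fun u => L t u (Dx t)) (x t) * h t
            + deriv (fun v => L t (x t) v) (Dx t) * Dh t)
        + L T (x T) (Dx T) * ΔT
        + deriv (fun s => φ s (x T)) T * ΔT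
        + deriv (fun u => φ T u) (x T) * (h T + deriv x T * ΔT))
      0 := by
  have hLd : Differentiable ℝ (fun p : ℝ × ℝ × ℝ => L p.1 p.2.1 p.2.2) := hL.differentiable one_ne_zero
  have hφd : Differentiable ℝ (fun p : ℝ × ℝ => φ p.1 p.2) := hφ.differentiable one_ne_zero
  set Fm : ℝ × ℝ → ℝ := fun p => L p.2 (x p.2 + p.1 * h p.2) (Dx p.2 + p.1 * Dh p.2)
    with hFmdef
  have hFmc : Continuous Fm := hmix.continuous
  have hFmd : Differentiable ℝ Fm := hmix.differentiable one_ne_zero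
  have hFd : Continuous (fderiv ℝ Fm) := hmix.continuous_fderiv one_ne_zero
  set F' : ℝ → ℝ → ℝ := fun ε t => fderiv ℝ Fm (ε, t) (1, 0) with hF'def
  have hF'c : Continuous (fun p : ℝ × ℝ => F' p.1 p.2) := hFd.clm_apply continuous_const
  have hF'deriv : ∀ (ε t : ℝ), HasDerivAt (fun e => Fm (e, t)) (F' ε t) ε := by
    intro ε t
    have h1 : HasDerivAt (fun e : ℝ => (e, t)) ((1 : ℝ), (0 : ℝ)) ε :=
      (hasDerivAt_id ε).prodMk (hasDerivAt_const ε t)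
    exact (hFmd (ε, t)).hasFDerivAt.comp_hasDerivAt ε h1
  have hslicec : ∀ ε : ℝ, Continuous (fun t => Fm (ε, t)) := fun ε =>
    hFmc.comp (continuous_const.prodMk continuous_id)
  have hInt : ∀ (ε c d : ℝ), IntervalIntegrable (fun t => Fm (ε, t)) MeasureTheory.volume c d :=
    fun ε c d => (hslicec ε).intervalIntegrable c d
  -- Part A : fixed-limits parametric integral
  have hA : HasDerivAt (fun ε : ℝ => ∫ t in a..T, Fm (ε, t)) (∫ t in a..T, F' 0 t) 0 := by
    obtain ⟨C, hC⟩ := (isCompact_Icc.prod isCompact_uIcc).exists_bound_of_continuousOn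
      (s := Icc (-1 : ℝ) 1 ×ˢ uIcc a T) hF'c.continuousOn
    have := intervalIntegral.hasDerivAt_integral_of_dominated_loc_of_deriv_le
      (μ := MeasureTheory.volume) (F := fun e t => Fm (e, t)) (F' := F') (x₀ := (0 : ℝ))
      (bound := fun _ => C) (a := a) (b := T) (Metric.ball_mem_nhds (0 : ℝ) one_pos)
      (Filter.Eventually.of_forall fun e => (hslicec e).aestronglyMeasurable)
      (hInt 0 a T)
      ((hF'c.comp (continuous_const.prodMk continuous_id)).aestronglyMeasurable)
      (Filter.Eventually.of_forall fun t ht e he => by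
        have he' : e ∈ Icc (-1 : ℝ) 1 := by
          have := Metric.mem_ball.mp he
          rw [Real.dist_eq, sub_zero] at this
          constructor <;> [linarith [neg_abs_le e]; linarith [le_abs_self e]]
        exact hC (e, t) ⟨he', uIoc_subset_uIcc ht⟩)
      intervalIntegrable_const
      (Filter.Eventually.of_forall fun t ht e he => hF'deriv e t)
    exact this.2
  -- pointwise identification of F' 0 t
  have hpt : ∀ t : ℝ, F' 0 t =
      deriv (fun u => L t u (Dx t)) (x t) * h t
        + deriv (fun v => L t (x t) v) (Dx t) * Dh t := by
    intro t
    set ℓ := fderiv ℝ (fun p : ℝ × ℝ × ℝ => L p.1 p.2.1 p.2.2) (t, x t, Dx t) with hℓ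
    have hLf : HasFDerivAt (fun p : ℝ × ℝ × ℝ => L p.1 p.2.1 p.2.2) ℓ (t, x t, Dx t) :=
      (hLd _).hasFDerivAt
    have h2 : HasDerivAt (fun u => L t u (Dx t)) (ℓ (0, 1, 0)) (x t) := by
      have hc : HasDerivAt (fun u : ℝ => ((t, u, Dx t) : ℝ × ℝ × ℝ))
          ((0 : ℝ), (1 : ℝ), (0 : ℝ)) (x t) :=
        (hasDerivAt_const _ _).prodMk ((hasDerivAt_id _).prodMk (hasDerivAt_const _ _))
      exact hLf.comp_hasDerivAt _ hc
    have h3 : HasDerivAt (fun v => L t (x t) v) (ℓ (0, 0, 1)) (Dx t) := by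
      have hc : HasDerivAt (fun v : ℝ => ((t, x t, v) : ℝ × ℝ × ℝ))
          ((0 : ℝ), (0 : ℝ), (1 : ℝ)) (Dx t) :=
        (hasDerivAt_const _ _).prodMk ((hasDerivAt_const _ _).prodMk (hasDerivAt_id _))
      exact hLf.comp_hasDerivAt _ hc
    have h4 : HasDerivAt (fun e : ℝ => Fm (e, t)) (ℓ (0, h t, Dh t)) 0 := by
      have h5 : HasDerivAt (fun e : ℝ => x t + e * h t) (h t) 0 := by
        simpa using ((hasDerivAt_id (0 : ℝ)).mul_const (h t)).const_add (x t)
      have h6 : HasDerivAt (fun e : ℝ => Dx t + e * Dh t) (Dh t) 0 := by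
        simpa using ((hasDerivAt_id (0 : ℝ)).mul_const (Dh t)).const_add (Dx t)
      have hc : HasDerivAt (fun e : ℝ => ((t, x t + e * h t, Dx t + e * Dh t) : ℝ × ℝ × ℝ))
          ((0 : ℝ), h t, Dh t) 0 := (hasDerivAt_const _ _).prodMk (h5.prodMk h6)
      have hLf' : HasFDerivAt (fun p : ℝ × ℝ × ℝ => L p.1 p.2.1 p.2.2) ℓ
          (t, x t + 0 * h t, Dx t + 0 * Dh t) := by simpa using hLf
      exact hLf'.comp_hasDerivAt _ hc
    have h8 : F' 0 t = ℓ (0, h t, Dh t) := (hF'deriv 0 t).unique h4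
    have h9 : ℓ (0, h t, Dh t) = h t * ℓ (0, 1, 0) + Dh t * ℓ (0, 0, 1) := by
      have hv : ((0 : ℝ), h t, Dh t)
          = h t • (((0 : ℝ), (1 : ℝ), (0 : ℝ)) : ℝ × ℝ × ℝ)
            + Dh t • (((0 : ℝ), (0 : ℝ), (1 : ℝ)) : ℝ × ℝ × ℝ) := by
        simp [Prod.ext_iff]
      rw [hv, map_add, map_smul, map_smul, smul_eq_mul, smul_eq_mul]
    rw [h8, h9, h2.deriv, h3.deriv]; ring
  -- Part B : moving endpoint
  have hu : HasDerivAt (fun ε : ℝ => T + ε * ΔT) ΔT 0 := by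
    simpa using ((hasDerivAt_id (0 : ℝ)).mul_const ΔT).const_add T
  have hg2 : HasDerivAt (fun ε : ℝ => ∫ t in T..(T + ε * ΔT), Fm (0, t)) (Fm (0, T) * ΔT) 0 := by
    have hFTC : HasDerivAt (fun s => ∫ t in T..s, Fm (0, t)) (Fm (0, T)) (T + 0 * ΔT) := by
      have := intervalIntegral.integral_hasDerivAt_right (hInt 0 T T)
        ((hslicec 0).stronglyMeasurableAtFilter _ _) (hslicec 0).continuousAt
      simpa using this
    exact hFTC.comp 0 hu
  have hg1 : HasDerivAt (fun ε : ℝ => ∫ t in T..(T + ε * ΔT), (Fm (ε, t) - Fm (0, t))) 0 0 := by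
    set S : Set (ℝ × ℝ) := Icc (-1 : ℝ) 1 ×ˢ Icc (T - (|ΔT| + 1)) (T + (|ΔT| + 1)) with hSdef
    have hScv : Convex ℝ S := (convex_Icc _ _).prod (convex_Icc _ _)
    have hScp : IsCompact S := isCompact_Icc.prod isCompact_Icc
    obtain ⟨C, hC⟩ := hScp.exists_bound_of_continuousOn hFd.continuousOn
    have hC0 : 0 ≤ C := by
      have h0T : ((0 : ℝ), T) ∈ S := by
        constructor
        · constructor <;> norm_num
        · constructor <;> nlinarith [abs_nonneg ΔT]
      exact le_trans (norm_nonneg _) (hC _ h0T)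
    have hlip : ∀ ε : ℝ, |ε| ≤ 1 → ∀ t ∈ uIoc T (T + ε * ΔT),
        ‖Fm (ε, t) - Fm (0, t)‖ ≤ C * |ε| := by
      intro ε hε t ht
      have habs : |ε * ΔT| ≤ |ΔT| := by
        rw [abs_mul]; nlinarith [abs_nonneg ΔT, abs_nonneg ε]
      have htmem : t ∈ Icc (T - (|ΔT| + 1)) (T + (|ΔT| + 1)) := by
        rcases Set.mem_uIoc.mp ht with h1 | h1 <;>
          constructor <;>
            nlinarith [neg_abs_le (ε * ΔT), le_abs_self (ε * ΔT), h1.1, h1.2]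
      have hmem1 : ((ε, t) : ℝ × ℝ) ∈ S := ⟨⟨by linarith [neg_abs_le ε], by linarith [le_abs_self ε]⟩, htmem⟩
      have hmem0 : ((0 : ℝ), t) ∈ S := ⟨by constructor <;> norm_num, htmem⟩
      have := hScv.norm_image_sub_le_of_norm_fderiv_le
        (fun p _ => hFmd p) (fun p hp => hC p hp) hmem0 hmem1
      have hnrm : ‖((ε, t) : ℝ × ℝ) - (0, t)‖ = |ε| := by
        have : ((ε, t) : ℝ × ℝ) - (0, t) = (ε, 0) := by simp [Prod.ext_iff]
        rw [this, Prod.norm_def]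
        simp [abs_nonneg]
      rw [hnrm] at this
      exact this
    rw [hasDerivAt_iff_isLittleO]
    simp only [sub_self, intervalIntegral.integral_zero, zero_mul, add_zero, sub_zero, smul_zero]
    rw [Asymptotics.isLittleO_iff]
    intro c hc
    have hδ : (0 : ℝ) < min 1 (c / (C * |ΔT| + 1)) := by
      apply lt_min one_pos
      positivity
    filter_upwards [Metric.ball_mem_nhds (0 : ℝ) hδ] with ε hε
    have hε' : |ε| < min 1 (c / (C * |ΔT| + 1)) := by
      have := Metric.mem_ball.mp hε
      rwa [Real.dist_eq, sub_zero] at this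
    have hε1 : |ε| ≤ 1 := le_of_lt (lt_of_lt_of_le hε' (min_le_left _ _))
    have hε2 : |ε| < c / (C * |ΔT| + 1) := lt_of_lt_of_le hε' (min_le_right _ _)
    have hbd := intervalIntegral.norm_integral_le_of_norm_le_const
      (fun t ht => hlip ε hε1 t ht)
    have hend : |T + ε * ΔT - T| = |ε| * |ΔT| := by
      rw [show T + ε * ΔT - T = ε * ΔT by ring, abs_mul]
    rw [hend] at hbd
    have hkey : |ε| * (C * |ΔT| + 1) < c := by
      rw [lt_div_iff₀ (by positivity)] at hε2
      linarith
    calc ‖∫ t in T..(T + ε * ΔT), (Fm (ε, t) - Fm (0, t))‖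
        ≤ C * |ε| * (|ε| * |ΔT|) := hbd
      _ ≤ c * ‖ε‖ := by
          rw [Real.norm_eq_abs]
          nlinarith [abs_nonneg ε, abs_nonneg ΔT]
  have hB : HasDerivAt (fun ε : ℝ => ∫ t in T..(T + ε * ΔT), Fm (ε, t)) (0 + Fm (0, T) * ΔT) 0 := by
    refine (hg1.add hg2).congr_of_eventuallyEq (Filter.Eventually.of_forall fun ε => ?_)
    show (∫ t in T..(T + ε * ΔT), Fm (ε, t))
      = (∫ t in T..(T + ε * ΔT), (Fm (ε, t) - Fm (0, t))) + ∫ t in T..(T + ε * ΔT), Fm (0, t)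
    rw [← intervalIntegral.integral_add ((hInt ε T _).sub (hInt 0 T _)) (hInt 0 T _)]
    simp
  -- Part C : the φ term
  have hCφ : HasDerivAt
      (fun ε : ℝ => φ (T + ε * ΔT) (x (T + ε * ΔT) + ε * h (T + ε * ΔT)))
      (deriv (fun s => φ s (x T)) T * ΔT
        + deriv (fun u => φ T u) (x T) * (h T + deriv x T * ΔT)) 0 := by
    set ℓ := fderiv ℝ (fun p : ℝ × ℝ => φ p.1 p.2) (T, x T) with hℓ
    have hφf : HasFDerivAt (fun p : ℝ × ℝ => φ p.1 p.2) ℓ (T, x T) := (hφd _).hasFDerivAt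
    have hxT : HasDerivAt x (deriv x T) (T + 0 * ΔT) := by
      simpa using (hx.differentiable one_ne_zero T).hasDerivAt
    have hxc : HasDerivAt (fun ε : ℝ => x (T + ε * ΔT)) (deriv x T * ΔT) 0 := hxT.comp 0 hu
    have hhT : HasDerivAt h (deriv h T) (T + 0 * ΔT) := by
      simpa using (hh.differentiable one_ne_zero T).hasDerivAt
    have hhc : HasDerivAt (fun ε : ℝ => h (T + ε * ΔT)) (deriv h T * ΔT) 0 := hhT.comp 0 hu
    have hεh : HasDerivAt (fun ε : ℝ => ε * h (T + ε * ΔT)) (h T) 0 := by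
      simpa [Pi.mul_def] using (hasDerivAt_id (0 : ℝ)).mul hhc
    have hcurve : HasDerivAt
        (fun ε : ℝ => ((T + ε * ΔT, x (T + ε * ΔT) + ε * h (T + ε * ΔT)) : ℝ × ℝ))
        ((ΔT, deriv x T * ΔT + h T) : ℝ × ℝ) 0 := hu.prodMk (hxc.add hεh)
    have hφf' : HasFDerivAt (fun p : ℝ × ℝ => φ p.1 p.2) ℓ
        (T + 0 * ΔT, x (T + 0 * ΔT) + 0 * h (T + 0 * ΔT)) := by simpa using hφf
    have hmain := hφf'.comp_hasDerivAt 0 hcurve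
    have hd1 : HasDerivAt (fun s => φ s (x T)) (ℓ (1, 0)) T :=
      by have := hφf.comp_hasDerivAt T ((hasDerivAt_id T).prodMk (hasDerivAt_const T (x T))); exact this
    have hd2 : HasDerivAt (fun u => φ T u) (ℓ (0, 1)) (x T) :=
      hφf.comp_hasDerivAt _ ((hasDerivAt_const _ _).prodMk (hasDerivAt_id _))
    have hval : ℓ ((ΔT, deriv x T * ΔT + h T) : ℝ × ℝ)
        = ℓ (1, 0) * ΔT + ℓ (0, 1) * (h T + deriv x T * ΔT) := by
      have hv : ((ΔT, deriv x T * ΔT + h T) : ℝ × ℝ)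
          = ΔT • (((1 : ℝ), (0 : ℝ)) : ℝ × ℝ)
            + (h T + deriv x T * ΔT) • (((0 : ℝ), (1 : ℝ)) : ℝ × ℝ) := by
        simp [Prod.ext_iff]; ring
      rw [hv, map_add, map_smul, map_smul, smul_eq_mul, smul_eq_mul]; ring
    rw [hd1.deriv, hd2.deriv, ← hval]
    exact hmain
  -- assemble
  have hfinal := (hA.add hB).add hCφ
  have hfun : (fun ε : ℝ =>
        (∫ t in a..(T + ε * ΔT), L t (x t + ε * h t) (Dx t + ε * Dh t))
          + φ (T + ε * ΔT) (x (T + ε * ΔT) + ε * h (T + ε * ΔT)))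
      = (fun ε : ℝ =>
        ((∫ t in a..T, Fm (ε, t)) + ∫ t in T..(T + ε * ΔT), Fm (ε, t))
          + φ (T + ε * ΔT) (x (T + ε * ΔT) + ε * h (T + ε * ΔT))) := by
    funext ε
    congr 1
    exact (intervalIntegral.integral_add_adjacent_intervals (hInt ε a T) (hInt ε T _)).symm
  rw [hfun]
  refine hfinal.congr_deriv ?_
  have hintc : (∫ t in a..T,
      deriv (fun u => L t u (Dx t)) (x t) * h t
        + deriv (fun v => L t (x t) v) (Dx t) * Dh t) = ∫ t in a..T, F' 0 t :=
    intervalIntegral.integral_congr fun t _ => (hpt t).symm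
  have hFm0T : Fm (0, T) = L T (x T) (Dx T) := by
    show L T (x T + 0 * h T) (Dx T + 0 * Dh T) = _
    norm_num
  rw [hintc, hFm0T]
  ring
end

section
/- Let α ∈ (0,1) be constant and x, y ∈ C¹([a,b]). Then ∫_a^b y(t)·(ᶜₐD_t^α x)(t) dt = ∫_a^b x(t)·(_tD_b^α y)(t) dt + [x(t)·(_tI_b^{1−α} y)(t)]_{t=a}^{t=b}, where ᶜₐD_t^α is the left Caputo derivative, _tD_b^α the right Riemann–Liouville derivative, and _tI_b^{1−α} the right Riemann–Liouville integral of order 1−α. -/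
open Real Set intervalIntegral MeasureTheory

namespace FracIBP

variable {α : ℝ}


variable {α : ℝ}

lemma ker_meas (α : ℝ) (s : ℝ) : Measurable (fun τ : ℝ => (τ - s) ^ (-α)) := by
  measurability

lemma ker_ii (hα1 : α < 1) (s c d : ℝ) :
    IntervalIntegrable (fun τ => (τ - s) ^ (-α)) volume c d := by
  have h := (intervalIntegral.intervalIntegrable_rpow' (a := c - s) (b := d - s)
      (r := -α) (by linarith)).comp_sub_right s
  simpa using h

lemma ker_ii' (hα1 : α < 1) (t c d : ℝ) :
    IntervalIntegrable (fun τ => (t - τ) ^ (-α)) volume c d := by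
  have h := (intervalIntegral.intervalIntegrable_rpow' (a := t - c) (b := t - d)
      (r := -α) (by linarith)).comp_sub_left t
  simpa using h

lemma ker_mul_ii (hα1 : α < 1) {z : ℝ → ℝ} (hz : Continuous z) (s c d : ℝ) :
    IntervalIntegrable (fun τ => (τ - s) ^ (-α) * z τ) volume c d :=
  (ker_ii hα1 s c d).mul_continuousOn hz.continuousOn

lemma ker_mul_ii' (hα1 : α < 1) {z : ℝ → ℝ} (hz : Continuous z) (t c d : ℝ) :
    IntervalIntegrable (fun τ => (t - τ) ^ (-α) * z τ) volume c d :=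
  (ker_ii' hα1 t c d).mul_continuousOn hz.continuousOn

lemma integral_ker (hα1 : α < 1) (s t : ℝ) :
    (∫ τ in s..t, (τ - s) ^ (-α)) = (t - s) ^ (1 - α) / (1 - α) := by
  have h : (∫ τ in s..t, (τ - s) ^ (-α))
      = ∫ u in s - s..t - s, u ^ (-α) :=
    intervalIntegral.integral_comp_sub_right (fun u => u ^ (-α)) s
  rw [h, sub_self, integral_rpow (Or.inl (by linarith))]
  rw [Real.zero_rpow (by linarith), show -α + 1 = 1 - α by ring]
  ring

lemma integral_ker' (hα1 : α < 1) (s t : ℝ) :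
    (∫ τ in s..t, (t - τ) ^ (-α)) = (t - s) ^ (1 - α) / (1 - α) := by
  have h : (∫ τ in s..t, (t - τ) ^ (-α))
      = ∫ u in t - t..t - s, u ^ (-α) :=
    intervalIntegral.integral_comp_sub_left (fun u => u ^ (-α)) t
  rw [h, sub_self, integral_rpow (Or.inl (by linarith))]
  rw [Real.zero_rpow (by linarith), show -α + 1 = 1 - α by ring]
  ring




lemma Kcont (hα1 : α < 1) (s : ℝ) : Continuous (fun τ : ℝ => (τ - s) ^ (1 - α)) := by
  have h : Continuous (fun u : ℝ => u ^ (1 - α)) :=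
    Real.continuous_rpow_const (by linarith)
  exact h.comp (continuous_id.sub continuous_const)

lemma stepA (hα : 0 < α) (hα1 : α < 1) {z : ℝ → ℝ} (hz : ContDiff ℝ 1 z)
    {s b : ℝ} (hsb : s ≤ b) :
    (∫ τ in s..b, (τ - s) ^ (-α) * z τ)
      = (b - s) ^ (1 - α) / (1 - α) * z b
        - ∫ τ in s..b, (τ - s) ^ (1 - α) / (1 - α) * deriv z τ := by
  set β := 1 - α with hβ
  have hβpos : 0 < β := by simp [hβ]; linarith
  have hzc : Continuous z := hz.continuous
  have hz' : Continuous (deriv z) := hz.continuous_deriv le_rfl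
  set G : ℝ → ℝ := fun τ => (τ - s) ^ β / β * z τ with hG
  set h : ℝ → ℝ := fun τ => (τ - s) ^ (-α) * z τ + (τ - s) ^ β / β * deriv z τ with hh
  have hcont : ContinuousOn G (Icc s b) :=
    (((Kcont hα1 s).div_const β).mul hzc).continuousOn
  have hderiv : ∀ t ∈ Ioo s b, HasDerivWithinAt G (h t) (Ioi t) t := by
    intro t ht
    have hne : t - s ≠ 0 := sub_ne_zero.2 (ne_of_gt ht.1)
    have h1 : HasDerivAt (fun τ : ℝ => (τ - s) ^ β) (β * (t - s) ^ (β - 1)) t := by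
      have := (Real.hasDerivAt_rpow_const (x := t - s) (p := β) (Or.inl hne)).comp t
        ((hasDerivAt_id t).sub_const s)
      simpa [Function.comp_def] using this
    have h2 : HasDerivAt (fun τ : ℝ => (τ - s) ^ β / β)
        ((t - s) ^ (-α)) t := by
      have := h1.div_const β
      have e : β * (t - s) ^ (β - 1) / β = (t - s) ^ (-α) := by
        rw [mul_comm, mul_div_assoc, div_self (ne_of_gt hβpos), mul_one]
        congr 1
        rw [hβ]; ring
      rwa [e] at this
    have h3 : HasDerivAt z (deriv z t) t :=
      (hz.differentiable one_ne_zero t).hasDerivAt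
    have := h2.mul h3
    have e2 : (t - s) ^ (-α) * z t + (t - s) ^ β / β * deriv z t = h t := rfl
    exact (by rwa [e2] at this : HasDerivAt G (h t) t).hasDerivWithinAt
  have hint1 : IntervalIntegrable (fun τ => (τ - s) ^ (-α) * z τ) volume s b :=
    ker_mul_ii hα1 hzc s s b
  have hint2 : IntervalIntegrable (fun τ => (τ - s) ^ β / β * deriv z τ) volume s b :=
    (((Kcont hα1 s).div_const β).mul hz').continuousOn.intervalIntegrable
  have hint : IntervalIntegrable h volume s b := hint1.add hint2
  have key := intervalIntegral.integral_eq_sub_of_hasDeriv_right_of_le hsb hcont hderiv hint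
  have hGs : G s = 0 := by
    simp [hG, Real.zero_rpow (ne_of_gt hβpos)]
  have hsum : (∫ τ in s..b, h τ)
      = (∫ τ in s..b, (τ - s) ^ (-α) * z τ)
        + ∫ τ in s..b, (τ - s) ^ β / β * deriv z τ :=
    intervalIntegral.integral_add hint1 hint2
  rw [hsum, hGs, sub_zero] at key
  have : G b = (b - s) ^ β / β * z b := rfl
  rw [this] at key
  have goal1 : (∫ τ in s..b, (τ - s) ^ β / β * deriv z τ)
      = ∫ τ in s..b, (τ - s) ^ (1 - α) / (1 - α) * deriv z τ := by rfl
  rw [← goal1]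
  linarith [key]

lemma fubini_triangle (hα : 0 < α) (hα1 : α < 1) {f g : ℝ → ℝ}
    (hf : Continuous f) (hg : Continuous g) {a b : ℝ} (hab : a ≤ b) :
    (∫ t in a..b, f t * ∫ τ in a..t, (t - τ) ^ (-α) * g τ)
      = ∫ τ in a..b, g τ * ∫ t in τ..b, (t - τ) ^ (-α) * f t := by
  set μ := volume.restrict (Ioc a b) with hμ
  set k : ℝ × ℝ → ℝ := fun p => (p.1 - p.2) ^ (-α) * f p.1 * g p.2 with hk
  set S : Set (ℝ × ℝ) := {p | p.2 < p.1} with hS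
  have hSmeas : MeasurableSet S := (isOpen_lt continuous_snd continuous_fst).measurableSet
  have hkmeas : Measurable k := by
    apply Measurable.mul
    apply Measurable.mul
    · measurability
    · exact (hf.comp continuous_fst).measurable
    · exact (hg.comp continuous_snd).measurable
  set F : ℝ × ℝ → ℝ := S.indicator k with hF
  have hFmeas : Measurable F := hkmeas.indicator hSmeas
  -- slices
  have hslice1 : ∀ t : ℝ, (fun τ => F (t, τ))
      = (Iio t).indicator (fun τ => (t - τ) ^ (-α) * f t * g τ) := by
    intro t; funext τ
    by_cases h : τ < t
    · rw [hF, Set.indicator_of_mem (by exact h : (t, τ) ∈ S),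
        Set.indicator_of_mem (by exact h)]
    · rw [hF, Set.indicator_of_notMem (by exact h : (t, τ) ∉ S),
        Set.indicator_of_notMem (by exact h)]
  have hslice2 : ∀ τ : ℝ, (fun t => F (t, τ))
      = (Ioi τ).indicator (fun t => (t - τ) ^ (-α) * f t * g τ) := by
    intro τ; funext t
    by_cases h : τ < t
    · rw [hF, Set.indicator_of_mem (by exact h : (t, τ) ∈ S),
        Set.indicator_of_mem (by exact h)]
    · rw [hF, Set.indicator_of_notMem (by exact h : (t, τ) ∉ S),
        Set.indicator_of_notMem (by exact h)]
  -- integrability of slices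
  have hslice_int : ∀ t : ℝ, Integrable (fun τ => F (t, τ)) μ := by
    intro t
    rw [hslice1 t]
    have hbase : IntervalIntegrable (fun τ => (t - τ) ^ (-α) * f t * g τ) volume a b := by
      have h1 := ker_mul_ii' hα1 (continuous_const.mul hg : Continuous fun τ => f t * g τ) t a b
      have h2 : (fun τ => (t - τ) ^ (-α) * f t * g τ)
          = fun τ => (t - τ) ^ (-α) * (f t * g τ) := by funext τ; ring
      rwa [h2]
    exact hbase.1.indicator measurableSet_Iio
  -- bounds
  obtain ⟨Cf, hCf⟩ := isCompact_Icc.exists_bound_of_continuousOn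
        (hf.continuousOn : ContinuousOn f (Icc a b))
  obtain ⟨Cg, hCg⟩ := isCompact_Icc.exists_bound_of_continuousOn
        (hg.continuousOn : ContinuousOn g (Icc a b))
  have hCf0 : 0 ≤ Cf := le_trans (norm_nonneg (f a)) (hCf a (by constructor <;> linarith))
  have hCg0 : 0 ≤ Cg := le_trans (norm_nonneg (g a)) (hCg a (by constructor <;> linarith))
  set M : ℝ := (b - a) ^ (1 - α) / (1 - α) * (Cf * Cg) with hM
  -- integrability on the product
  have hInt : Integrable F (μ.prod μ) := by
    rw [integrable_prod_iff hFmeas.aestronglyMeasurable]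
    refine ⟨Filter.Eventually.of_forall hslice_int, ?_⟩
    apply Integrable.mono' (g := fun _ => M)
        (integrable_const M) hFmeas.aestronglyMeasurable.norm.integral_prod_right'
    refine (ae_restrict_iff' measurableSet_Ioc).2 (Filter.Eventually.of_forall fun t ht => ?_)
    have hnn : 0 ≤ ∫ τ, ‖F (t, τ)‖ ∂μ := integral_nonneg fun τ => norm_nonneg _
    rw [Real.norm_of_nonneg hnn]
    set φ : ℝ → ℝ := (Iio t).indicator (fun τ => (t - τ) ^ (-α) * (Cf * Cg)) with hφ
    have hφint : Integrable φ μ :=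
      (((ker_ii' hα1 t a b).mul_const (Cf * Cg)).1).indicator measurableSet_Iio
    have hle : ∀ᵐ τ ∂μ, ‖F (t, τ)‖ ≤ φ τ := by
      refine (ae_restrict_iff' measurableSet_Ioc).2 (Filter.Eventually.of_forall fun τ hτ => ?_)
      rw [congrFun (hslice1 t) τ]
      by_cases h : τ < t
      · rw [Set.indicator_of_mem (by exact h), hφ, Set.indicator_of_mem (by exact h)]
        have h1 : 0 ≤ (t - τ) ^ (-α) := Real.rpow_nonneg (by linarith) _
        have h2 : ‖(t - τ) ^ (-α) * f t * g τ‖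
            = (t - τ) ^ (-α) * ‖f t‖ * ‖g τ‖ := by
          rw [norm_mul, norm_mul, Real.norm_of_nonneg h1]
        rw [h2, mul_assoc]
        apply mul_le_mul_of_nonneg_left _ h1
        exact mul_le_mul (hCf t ⟨le_of_lt ht.1, ht.2⟩) (hCg τ ⟨le_of_lt hτ.1, hτ.2⟩)
          (norm_nonneg _) hCf0
      · rw [Set.indicator_of_notMem (by exact h), hφ,
          Set.indicator_of_notMem (by exact h)]
        simp
    calc ∫ τ, ‖F (t, τ)‖ ∂μ ≤ ∫ τ, φ τ ∂μ :=
          integral_mono_ae (hslice_int t).norm hφint hle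
      _ = ∫ τ in Iio t ∩ Ioc a b, (t - τ) ^ (-α) * (Cf * Cg) ∂volume := by
          rw [hμ, hφ, MeasureTheory.integral_indicator measurableSet_Iio, Measure.restrict_restrict
            measurableSet_Iio]
      _ ≤ ∫ τ in Ioc a t, (t - τ) ^ (-α) * (Cf * Cg) ∂volume := by
          apply setIntegral_mono_set ((ker_ii' hα1 t a t).mul_const (Cf * Cg)).1
          · refine (ae_restrict_iff' measurableSet_Ioc).2 (Filter.Eventually.of_forall fun τ hτ => ?_)
            exact mul_nonneg (Real.rpow_nonneg (by linarith [hτ.2]) _) (by positivity)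
          · refine HasSubset.Subset.eventuallyLE fun τ hτ => ?_
            exact ⟨hτ.2.1, le_of_lt hτ.1⟩
      _ = (∫ τ in a..t, (t - τ) ^ (-α)) * (Cf * Cg) := by
          rw [intervalIntegral.integral_of_le (le_of_lt ht.1),
            MeasureTheory.integral_mul_const]
      _ = (t - a) ^ (1 - α) / (1 - α) * (Cf * Cg) := by rw [integral_ker' hα1]
      _ ≤ M := by
          rw [hM]
          gcongr
          all_goals linarith [ht.1, ht.2]
  -- swap
  have hswap : (∫ t, (∫ τ, F (t, τ) ∂μ) ∂μ) = ∫ τ, (∫ t, F (t, τ) ∂μ) ∂μ :=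
    integral_integral_swap (f := fun t τ => F (t, τ)) hInt
  -- identify LHS
  have hL : (∫ t, (∫ τ, F (t, τ) ∂μ) ∂μ)
      = ∫ t in a..b, f t * ∫ τ in a..t, (t - τ) ^ (-α) * g τ := by
    rw [intervalIntegral.integral_of_le hab, hμ]
    apply setIntegral_congr_fun measurableSet_Ioc
    intro t ht
    have hset : Iio t ∩ Ioc a b = Ioo a t := by
      ext τ
      constructor
      · rintro ⟨h1, h2, h3⟩; exact ⟨h2, h1⟩
      · rintro ⟨h1, h2⟩; exact ⟨h2, h1, le_trans (le_of_lt h2) ht.2⟩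
    calc (∫ τ, F (t, τ) ∂μ)
        = ∫ τ in Iio t ∩ Ioc a b, (t - τ) ^ (-α) * f t * g τ ∂volume := by
          rw [hslice1 t, hμ, MeasureTheory.integral_indicator measurableSet_Iio,
            Measure.restrict_restrict measurableSet_Iio]
      _ = ∫ τ in Ioc a t, (t - τ) ^ (-α) * f t * g τ ∂volume := by
          rw [hset, integral_Ioc_eq_integral_Ioo]
      _ = ∫ τ in a..t, (t - τ) ^ (-α) * f t * g τ := by
          rw [intervalIntegral.integral_of_le (le_of_lt ht.1)]
      _ = f t * ∫ τ in a..t, (t - τ) ^ (-α) * g τ := by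
          rw [← intervalIntegral.integral_const_mul]
          congr 1; funext τ; ring
  -- identify RHS
  have hR : (∫ τ, (∫ t, F (t, τ) ∂μ) ∂μ)
      = ∫ τ in a..b, g τ * ∫ t in τ..b, (t - τ) ^ (-α) * f t := by
    rw [intervalIntegral.integral_of_le hab, hμ]
    apply setIntegral_congr_fun measurableSet_Ioc
    intro τ hτ
    have hset : Ioi τ ∩ Ioc a b = Ioc τ b := by
      ext t
      constructor
      · rintro ⟨h1, h2, h3⟩; exact ⟨h1, h3⟩
      · rintro ⟨h1, h2⟩; exact ⟨h1, lt_trans hτ.1 h1, h2⟩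
    calc (∫ t, F (t, τ) ∂μ)
        = ∫ t in Ioi τ ∩ Ioc a b, (t - τ) ^ (-α) * f t * g τ ∂volume := by
          rw [hslice2 τ, hμ, MeasureTheory.integral_indicator measurableSet_Ioi,
            Measure.restrict_restrict measurableSet_Ioi]
      _ = ∫ t in τ..b, (t - τ) ^ (-α) * f t * g τ := by
          rw [hset, intervalIntegral.integral_of_le hτ.2]
      _ = g τ * ∫ t in τ..b, (t - τ) ^ (-α) * f t := by
          rw [← intervalIntegral.integral_const_mul]
          congr 1; funext t; ring
  rw [← hL, ← hR, hswap]



/-- `J σ = ∫ τ in σ..b, (τ-σ)^(-α) * w τ` rewritten with a fixed integration interval. -/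
lemma J_eq_Jfix (hα : 0 < α) (hα1 : α < 1) {w : ℝ → ℝ} (hw : Continuous w)
    {b L : ℝ} {σ : ℝ} (h0 : 0 ≤ b - σ) (hL : b - σ ≤ L) :
    (∫ τ in σ..b, (τ - σ) ^ (-α) * w τ)
      = ∫ u in (0:ℝ)..L, (Iic (b - σ)).indicator (fun u => u ^ (-α) * w (σ + u)) u := by
  have hsub : (∫ τ in σ..b, (τ - σ) ^ (-α) * w τ)
      = ∫ u in σ - σ..b - σ, u ^ (-α) * w (σ + u) := by
    rw [← intervalIntegral.integral_comp_sub_right (fun u => u ^ (-α) * w (σ + u)) σ]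
    congr 1
    funext τ
    rw [add_sub_cancel]
  rw [hsub, sub_self]
  rw [intervalIntegral.integral_of_le h0, intervalIntegral.integral_of_le (le_trans h0 hL)]
  rw [MeasureTheory.integral_indicator measurableSet_Iic, Measure.restrict_restrict
    measurableSet_Iic]
  have hset : Iic (b - σ) ∩ Ioc 0 L = Ioc 0 (b - σ) := by
    ext u
    simp only [mem_inter_iff, mem_Iic, mem_Ioc]
    constructor
    · rintro ⟨h1, h2, h3⟩; exact ⟨h2, h1⟩
    · rintro ⟨h1, h2⟩; exact ⟨h2, h1, le_trans h2 hL⟩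
  rw [hset]

lemma Jfix_contAt (hα : 0 < α) (hα1 : α < 1) {w : ℝ → ℝ} (hw : Continuous w)
    {b L : ℝ} (hL : 0 < L) (σ₀ : ℝ) :
    ContinuousAt (fun σ => ∫ u in (0:ℝ)..L,
      (Iic (b - σ)).indicator (fun u => u ^ (-α) * w (σ + u)) u) σ₀ := by
  obtain ⟨C, hC⟩ := isCompact_Icc.exists_bound_of_continuousOn
    (hw.continuousOn : ContinuousOn w (Icc (σ₀ - 1) (σ₀ + 1 + L)))
  have hC0 : 0 ≤ C := le_trans (norm_nonneg (w (σ₀ - 1)))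
    (hC (σ₀ - 1) ⟨le_refl _, by linarith⟩)
  apply intervalIntegral.continuousAt_of_dominated_interval
      (bound := fun u => u ^ (-α) * C)
  · refine Filter.Eventually.of_forall fun σ => ?_
    apply Measurable.aestronglyMeasurable
    apply Measurable.indicator _ measurableSet_Iic
    apply Measurable.mul
    · measurability
    · exact (hw.comp (continuous_const.add continuous_id)).measurable
  · have hU : Ioo (σ₀ - 1) (σ₀ + 1) ∈ nhds σ₀ :=
      Ioo_mem_nhds (by linarith) (by linarith)
    filter_upwards [hU] with σ hσ
    refine Filter.Eventually.of_forall fun u hu => ?_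
    rw [uIoc_of_le (le_of_lt hL)] at hu
    by_cases h : u ∈ Iic (b - σ)
    · rw [Set.indicator_of_mem h]
      have h1 : 0 ≤ u ^ (-α) := Real.rpow_nonneg (le_of_lt hu.1) _
      rw [norm_mul, Real.norm_of_nonneg h1]
      apply mul_le_mul_of_nonneg_left _ h1
      apply hC
      constructor
      · linarith [hσ.1, hu.1]
      · linarith [hσ.2, hu.2]
    · rw [Set.indicator_of_notMem h]
      simp only [norm_zero]
      exact mul_nonneg (Real.rpow_nonneg (le_of_lt hu.1) _) hC0
  · exact (intervalIntegral.intervalIntegrable_rpow' (by linarith)).mul_const C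
  · have hmeas : MeasurableSet {u : ℝ | u = b - σ₀} := measurableSet_eq
    have hnull : volume {u : ℝ | u = b - σ₀} = 0 := by
      simp [Set.setOf_eq_eq_singleton]
    filter_upwards [measure_eq_zero_iff_ae_notMem.1 hnull] with u hu _
    have hune : u ≠ b - σ₀ := hu
    rcases lt_or_gt_of_ne hune with hlt | hgt
    · -- eventually u ≤ b - σ, indicator = value
      have hev : ∀ᶠ σ in nhds σ₀, u ∈ Iic (b - σ) := by
        have : Ioo (σ₀ - 1) (b - u) ∈ nhds σ₀ := Ioo_mem_nhds (by linarith) (by linarith)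
        filter_upwards [this] with σ hσ
        exact le_of_lt (by linarith [hσ.2] : u < b - σ)
      have hcont : ContinuousAt (fun σ => u ^ (-α) * w (σ + u)) σ₀ :=
        (continuous_const.mul (hw.comp (continuous_id.add continuous_const))).continuousAt
      apply hcont.congr
      filter_upwards [hev] with σ hσ
      rw [Set.indicator_of_mem hσ]
    · have hev : ∀ᶠ σ in nhds σ₀, u ∉ Iic (b - σ) := by
        have : Ioo (b - u) (σ₀ + 1) ∈ nhds σ₀ := Ioo_mem_nhds (by linarith) (by linarith)
        filter_upwards [this] with σ hσ
        exact not_le.2 (by linarith [hσ.1] : b - σ < u)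
      apply continuousAt_const.congr
      filter_upwards [hev] with σ hσ
      rw [Set.indicator_of_notMem hσ]

lemma J_contOn (hα : 0 < α) (hα1 : α < 1) {w : ℝ → ℝ} (hw : Continuous w)
    {a b : ℝ} (hab : a ≤ b) :
    ContinuousOn (fun σ => ∫ τ in σ..b, (τ - σ) ^ (-α) * w τ) (Icc a b) := by
  have hL : (0:ℝ) < b - a + 1 := by linarith
  intro σ₀ hσ₀
  apply ((Jfix_contAt hα hα1 hw hL σ₀).continuousWithinAt).congr
  · intro σ hσ
    exact J_eq_Jfix hα hα1 hw (by linarith [hσ.2]) (by linarith [hσ.1])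
  · exact J_eq_Jfix hα hα1 hw (by linarith [hσ₀.2]) (by linarith [hσ₀.1])

lemma J_contAt (hα : 0 < α) (hα1 : α < 1) {w : ℝ → ℝ} (hw : Continuous w)
    {b σ₀ : ℝ} (h : σ₀ < b) :
    ContinuousAt (fun σ => ∫ τ in σ..b, (τ - σ) ^ (-α) * w τ) σ₀ := by
  have hL : (0:ℝ) < b - σ₀ + 1 := by linarith
  apply (Jfix_contAt hα hα1 hw hL σ₀).congr
  have hU : Ioo (σ₀ - 1) b ∈ nhds σ₀ := Ioo_mem_nhds (by linarith) h
  filter_upwards [hU] with σ hσ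
  exact (J_eq_Jfix hα hα1 hw (by linarith [hσ.2]) (by linarith [hσ.1])).symm

lemma I_rep (hα : 0 < α) (hα1 : α < 1) {y : ℝ → ℝ} (hy : ContDiff ℝ 1 y)
    {s b : ℝ} (hsb : s ≤ b) :
    (∫ τ in s..b, (τ - s) ^ (-α) * y τ)
      = (b - s) ^ (1 - α) / (1 - α) * y b
        - ∫ σ in s..b, ∫ τ in σ..b, (τ - σ) ^ (-α) * deriv y τ := by
  rw [stepA hα hα1 hy hsb]
  congr 1
  have hy' : Continuous (deriv y) := hy.continuous_deriv le_rfl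
  have hfub := fubini_triangle hα hα1 hy' (continuous_const : Continuous fun _ : ℝ => (1:ℝ))
    hsb
  simp only [mul_one, one_mul] at hfub
  simp only [integral_ker' hα1] at hfub
  calc (∫ τ in s..b, (τ - s) ^ (1 - α) / (1 - α) * deriv y τ)
      = ∫ t in s..b, deriv y t * ((t - s) ^ (1 - α) / (1 - α)) := by
        apply intervalIntegral.integral_congr
        intro t _
        ring
    _ = ∫ σ in s..b, ∫ τ in σ..b, (τ - σ) ^ (-α) * deriv y τ := hfub

lemma I_hasDeriv (hα : 0 < α) (hα1 : α < 1) {y : ℝ → ℝ} (hy : ContDiff ℝ 1 y)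
    {a b t : ℝ} (ht : t ∈ Ioo a b) :
    HasDerivAt (fun s => ∫ τ in s..b, (τ - s) ^ (-α) * y τ)
      (-((b - t) ^ (-α)) * y b + ∫ τ in t..b, (τ - t) ^ (-α) * deriv y τ) t := by
  have hy' : Continuous (deriv y) := hy.continuous_deriv le_rfl
  have hab : a ≤ b := le_of_lt (lt_trans ht.1 ht.2)
  set J : ℝ → ℝ := fun σ => ∫ τ in σ..b, (τ - σ) ^ (-α) * deriv y τ with hJ
  have hβ : (0:ℝ) < 1 - α := by linarith
  -- derivative of the first part
  have h1 : HasDerivAt (fun s => (b - s) ^ (1 - α) / (1 - α) * y b)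
      (-((b - t) ^ (-α)) * y b) t := by
    have hne : b - t ≠ 0 := sub_ne_zero.2 (ne_of_gt ht.2)
    have hb : HasDerivAt (fun s : ℝ => (b - s) ^ (1 - α))
        ((1 - α) * (b - t) ^ (1 - α - 1) * (0 - 1)) t :=
      (Real.hasDerivAt_rpow_const (x := b - t) (p := 1 - α) (Or.inl hne)).comp t
        ((hasDerivAt_const t b).sub (hasDerivAt_id t))
    have := (hb.div_const (1 - α)).mul_const (y b)
    have e : (1 - α) * (b - t) ^ (1 - α - 1) * (0 - 1) / (1 - α) * y b
        = -((b - t) ^ (-α)) * y b := by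
      rw [show (1 - α - 1) = -α by ring]
      field_simp
      ring
    rwa [e] at this
  -- derivative of the second part
  have hJint : IntervalIntegrable J volume t b := by
    apply ContinuousOn.intervalIntegrable
    rw [uIcc_of_le (le_of_lt ht.2)]
    exact (J_contOn hα hα1 hy' hab).mono (Icc_subset_Icc (le_of_lt ht.1) le_rfl)
  have hJmeas : StronglyMeasurableAtFilter J (nhds t) volume := by
    have hcont : ContinuousOn J (Ioo a b) := fun σ hσ =>
      (J_contAt hα hα1 hy' hσ.2).continuousWithinAt
    exact ContinuousOn.stronglyMeasurableAtFilter isOpen_Ioo hcont t ht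
  have h2 : HasDerivAt (fun s => ∫ σ in s..b, J σ) (-(J t)) t :=
    intervalIntegral.integral_hasDerivAt_left hJint hJmeas (J_contAt hα hα1 hy' ht.2)
  have hN := h1.sub h2
  have e2 : -((b - t) ^ (-α)) * y b - -(J t)
      = -((b - t) ^ (-α)) * y b + ∫ τ in t..b, (τ - t) ^ (-α) * deriv y τ := by
    rw [hJ]; ring
  rw [e2] at hN
  apply hN.congr_of_eventuallyEq
  have hU : Iio b ∈ nhds t := Iio_mem_nhds ht.2
  filter_upwards [hU] with s hs
  exact I_rep hα hα1 hy (le_of_lt hs)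

lemma I_contOn (hα : 0 < α) (hα1 : α < 1) {y : ℝ → ℝ} (hy : ContDiff ℝ 1 y)
    {a b : ℝ} (hab : a ≤ b) :
    ContinuousOn (fun s => ∫ τ in s..b, (τ - s) ^ (-α) * y τ) (Icc a b) := by
  have hy' : Continuous (deriv y) := hy.continuous_deriv le_rfl
  have hN : ContinuousOn (fun s => (b - s) ^ (1 - α) / (1 - α) * y b
      - ∫ σ in s..b, ∫ τ in σ..b, (τ - σ) ^ (-α) * deriv y τ) (Icc a b) := by
    apply ContinuousOn.sub
    · apply Continuous.continuousOn
      exact (((Real.continuous_rpow_const (by linarith)).comp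
        (continuous_const.sub continuous_id)).div_const _).mul continuous_const
    · have hint : IntegrableOn (fun σ => ∫ τ in σ..b, (τ - σ) ^ (-α) * deriv y τ)
          (uIcc a b) volume := by
        rw [uIcc_of_le hab]
        exact (J_contOn hα hα1 hy' hab).integrableOn_Icc
      have := intervalIntegral.continuousOn_primitive_interval_left hint
      rwa [uIcc_of_le hab] at this
  apply hN.congr
  intro s hs
  exact I_rep hα hα1 hy hs.2


end FracIBP

open FracIBP


/-- fractional integration by parts (left Caputo / right
Riemann–Liouville), constant order α ∈ (0,1). -/
theorem frac_int_by_parts_left (a b : ℝ) (hab : a < b) (α : ℝ)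
    (hα : 0 < α) (hα1 : α < 1) (x y : ℝ → ℝ)
    (hx : ContDiff ℝ 1 x) (hy : ContDiff ℝ 1 y) :
    (∫ t in a..b, y t * ((1 / Real.Gamma (1 - α)) * ∫ τ in a..t, (t - τ) ^ (-α) * deriv x τ))
      = (∫ t in a..b, x t *
          (-(deriv (fun s => (1 / Real.Gamma (1 - α)) * ∫ τ in s..b, (τ - s) ^ (-α) * y τ) t)))
        + (x b * ((1 / Real.Gamma (1 - α)) * ∫ τ in b..b, (τ - b) ^ (-α) * y τ)
            - x a * ((1 / Real.Gamma (1 - α)) * ∫ τ in a..b, (τ - a) ^ (-α) * y τ)) := by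
  have hable : a ≤ b := le_of_lt hab
  set c : ℝ := 1 / Real.Gamma (1 - α) with hc
  have hyc : Continuous y := hy.continuous
  have hxc : Continuous x := hx.continuous
  have hx' : Continuous (deriv x) := hx.continuous_deriv le_rfl
  have hy' : Continuous (deriv y) := hy.continuous_deriv le_rfl
  set g : ℝ → ℝ := fun t =>
    c * (-((b - t) ^ (-α)) * y b + ∫ τ in t..b, (τ - t) ^ (-α) * deriv y τ) with hg
  -- LHS via Fubini
  have hLHS : (∫ t in a..b, y t * (c * ∫ τ in a..t, (t - τ) ^ (-α) * deriv x τ))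
      = ∫ t in a..b, deriv x t * (c * ∫ τ in t..b, (τ - t) ^ (-α) * y τ) := by
    have h1 : (fun t => y t * (c * ∫ τ in a..t, (t - τ) ^ (-α) * deriv x τ))
        = fun t => c * (y t * ∫ τ in a..t, (t - τ) ^ (-α) * deriv x τ) := by
      funext t; ring
    have h2 : (fun t => deriv x t * (c * ∫ τ in t..b, (τ - t) ^ (-α) * y τ))
        = fun t => c * (deriv x t * ∫ τ in t..b, (τ - t) ^ (-α) * y τ) := by
      funext t; ring
    rw [h1, h2, intervalIntegral.integral_const_mul, intervalIntegral.integral_const_mul,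
      fubini_triangle hα hα1 hyc hx' hable]
  -- derivative of the RL integral
  have hIderiv : ∀ t ∈ Ioo a b,
      HasDerivAt (fun s => c * ∫ τ in s..b, (τ - s) ^ (-α) * y τ) (g t) t :=
    fun t ht => (I_hasDeriv hα hα1 hy ht).const_mul c
  -- continuity of the RL integral
  have hIcont : ContinuousOn (fun s => c * ∫ τ in s..b, (τ - s) ^ (-α) * y τ) (Icc a b) :=
    continuousOn_const.mul (I_contOn hα hα1 hy hable)
  -- integration by parts
  have hint1 : IntervalIntegrable
      (fun t => deriv x t * (c * ∫ τ in t..b, (τ - t) ^ (-α) * y τ)) volume a b := by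
    apply ContinuousOn.intervalIntegrable
    rw [uIcc_of_le hable]
    exact hx'.continuousOn.mul hIcont
  have hint2 : IntervalIntegrable (fun t => x t * g t) volume a b := by
    have hrw : (fun t => x t * g t)
        = fun t => (b - t) ^ (-α) * (-(c * y b) * x t)
          + (c * x t) * ∫ τ in t..b, (τ - t) ^ (-α) * deriv y τ := by
      funext t; rw [hg]; ring
    rw [hrw]
    apply IntervalIntegrable.add
    · exact ker_mul_ii' hα1 ((continuous_const.mul hxc) :
        Continuous fun t => -(c * y b) * x t) b a b
    · apply ContinuousOn.intervalIntegrable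
      rw [uIcc_of_le hable]
      exact (continuousOn_const.mul hxc.continuousOn).mul (J_contOn hα hα1 hy' hable)
  have hparts : (∫ t in a..b,
        (deriv x t * (c * ∫ τ in t..b, (τ - t) ^ (-α) * y τ) + x t * g t))
      = x b * (c * ∫ τ in b..b, (τ - b) ^ (-α) * y τ)
        - x a * (c * ∫ τ in a..b, (τ - a) ^ (-α) * y τ) := by
    have h := intervalIntegral.integral_eq_sub_of_hasDeriv_right_of_le (a := a) (b := b)
      (f := fun t => x t * (c * ∫ τ in t..b, (τ - t) ^ (-α) * y τ))
      (f' := fun t => deriv x t * (c * ∫ τ in t..b, (τ - t) ^ (-α) * y τ) + x t * g t)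
      hable (hxc.continuousOn.mul hIcont)
      (fun t ht =>
        (((hx.differentiable one_ne_zero t).hasDerivAt).mul (hIderiv t ht)).hasDerivWithinAt)
      (hint1.add hint2)
    exact h
  have hsplit : (∫ t in a..b,
        (deriv x t * (c * ∫ τ in t..b, (τ - t) ^ (-α) * y τ) + x t * g t))
      = (∫ t in a..b, deriv x t * (c * ∫ τ in t..b, (τ - t) ^ (-α) * y τ))
        + ∫ t in a..b, x t * g t :=
    intervalIntegral.integral_add hint1 hint2
  -- the deriv in the statement equals g a.e.
  have hcongr : (∫ t in a..b,
        x t * (-(deriv (fun s => c * ∫ τ in s..b, (τ - s) ^ (-α) * y τ) t)))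
      = ∫ t in a..b, -(x t * g t) := by
    apply intervalIntegral.integral_congr_ae
    have hnull : volume ({b} : Set ℝ) = 0 := measure_singleton b
    filter_upwards [measure_eq_zero_iff_ae_notMem.1 hnull] with t htb hmem
    rw [uIoc_of_le hable] at hmem
    have htIoo : t ∈ Ioo a b := ⟨hmem.1, lt_of_le_of_ne hmem.2 htb⟩
    rw [(hIderiv t htIoo).deriv]
    ring
  rw [hLHS, hcongr, intervalIntegral.integral_neg, ← hparts, hsplit]
  ring
end
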